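/- Let ρ₁, ρ₂ be normalized proximate order functions with limits ρ₁₀, ρ₂₀ > 0 satisfying r^{ρ₁(r)} = O(r^{ρ₂(r)}) as r → ∞, and with ρ₁(r) ≤ ρ₂(r) for all r ≥ 0. Suppose (u_ℓ) are entire functions on ℂ such that for every ε > 0 there exist σ, C > 0 with ‖u_ℓ‖_{ρ₂,σ} ≤ C·(G_{ρ₁,ℓ}/ℓ!)·ε^ℓ for all ℓ. Then for every entire f with ‖f‖_{ρ₁,τ} < ∞ for some τ > 0, the series T f := Σ_{ℓ≥0} u_ℓ·f^{(ℓ)} converges in the norm ‖·‖_{ρ₂, σ + 2^{ρ₁₀+1}τ} for suitable σ, and T defines a continuous linear operator from A_{ρ₁} = ∪_{τ>0} A_{ρ₁,τ} to A_{ρ₂} = ∪_{σ>0} A_{ρ₂,σ}. -/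

import Mathlib

open Filter Real Complex

lemma cauchy_est (f : ℂ → ℂ) (hf : Differentiable ℂ f) (z : ℂ) (R : ℝ) (hR : 0 < R)
    (M' : ℝ) (hM' : ∀ θ : ℝ, ‖f (circleMap z R θ)‖ ≤ M') (ℓ : ℕ) :
    ‖iteratedDeriv ℓ f z‖ ≤ (ℓ.factorial : ℝ) * M' / R ^ ℓ := by
  have hM0 : 0 ≤ M' := le_trans (norm_nonneg _) (hM' 0)
  set R' : NNReal := ⟨R, hR.le⟩ with hR'
  have hR'pos : (0:NNReal) < R' := by exact_mod_cast hR
  have h := hf.hasFPowerSeriesOnBall z hR'pos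
  have h1 := h.factorial_smul (1:ℂ) ℓ
  have h2 : iteratedDeriv ℓ f z = iteratedFDeriv ℂ ℓ f z (fun _ => 1) :=
    iteratedDeriv_eq_iteratedFDeriv
  have h3 : ‖iteratedDeriv ℓ f z‖
      = (ℓ.factorial : ℝ) * ‖cauchyPowerSeries f z R' ℓ (fun _ => (1:ℂ))‖ := by
    rw [h2, ← h1]
    simp [norm_smul]
  have h4 : ‖cauchyPowerSeries f z R' ℓ (fun _ => (1:ℂ))‖ ≤ ‖cauchyPowerSeries f z R' ℓ‖ := by
    have := (cauchyPowerSeries f z R' ℓ).le_opNorm (fun _ => (1:ℂ))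
    simpa using this
  have h5 := norm_cauchyPowerSeries_le f z R ℓ
  have hint : (∫ θ : ℝ in (0:ℝ)..2 * π, ‖f (circleMap z R θ)‖) ≤ 2 * π * M' := by
    have hcont : Continuous fun θ : ℝ => ‖f (circleMap z R θ)‖ :=
      (hf.continuous.comp (continuous_circleMap z R)).norm
    calc (∫ θ : ℝ in (0:ℝ)..2 * π, ‖f (circleMap z R θ)‖)
        ≤ ∫ _ : ℝ in (0:ℝ)..2 * π, M' := by
          apply intervalIntegral.integral_mono_on Real.two_pi_pos.le
            (hcont.intervalIntegrable _ _) (intervalIntegrable_const)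
          intro θ _; exact hM' θ
      _ = 2 * π * M' := by simp [mul_comm]
  have h6 : ‖cauchyPowerSeries f z R' ℓ‖ ≤ M' * |R|⁻¹ ^ ℓ := by
    refine le_trans h5 (mul_le_mul_of_nonneg_right ?_ (by positivity))
    calc (2 * π)⁻¹ * ∫ θ : ℝ in (0:ℝ)..2 * π, ‖f (circleMap z R θ)‖
        ≤ (2 * π)⁻¹ * (2 * π * M') :=
          mul_le_mul_of_nonneg_left hint (by positivity)
      _ = M' := by field_simp
  rw [h3]
  rw [abs_of_pos hR] at h6
  calc (ℓ.factorial : ℝ) * ‖cauchyPowerSeries f z R' ℓ (fun _ => (1:ℂ))‖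
      ≤ (ℓ.factorial : ℝ) * (M' * R⁻¹ ^ ℓ) := by gcongr; exact le_trans h4 h6
    _ = (ℓ.factorial : ℝ) * M' / R ^ ℓ := by
        rw [inv_pow]; ring

lemma doubling (ρ : ℝ → ℝ) (ρ₀ : ℝ) (hdiff : Differentiable ℝ ρ)
    (hlim : Filter.Tendsto ρ Filter.atTop (nhds ρ₀))
    (hder : Filter.Tendsto (fun r => deriv ρ r * r * Real.log r) Filter.atTop (nhds 0))
    (hmono : StrictMonoOn (fun r => r ^ ρ r) (Set.Ioi (0:ℝ))) :
    ∃ B : ℝ, 0 ≤ B ∧ ∀ m : ℝ, 0 < m →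
      (2*m) ^ ρ (2*m) ≤ (2:ℝ) ^ (ρ₀+1) * m ^ ρ m + B := by
  -- from hder: eventually |deriv ρ ξ * ξ * log ξ| ≤ (log 2)/2
  have hlog2 : (0:ℝ) < Real.log 2 := Real.log_pos one_lt_two
  have h1 : ∀ᶠ ξ in atTop, |deriv ρ ξ * ξ * Real.log ξ| ≤ Real.log 2 / 2 := by
    have := hder.eventually (Metric.closedBall_mem_nhds (0:ℝ) (by positivity : (0:ℝ) < Real.log 2 / 2))
    filter_upwards [this] with ξ hξ
    simpa [Real.dist_eq, abs_mul] using hξ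
  have h2 : ∀ᶠ r in atTop, ρ r ≤ ρ₀ + 1/2 := by
    have := hlim.eventually (Metric.closedBall_mem_nhds ρ₀ (by norm_num : (0:ℝ) < 1/2))
    filter_upwards [this] with r hr
    have : |ρ r - ρ₀| ≤ 1/2 := by simpa [Real.dist_eq] using hr
    linarith [abs_le.1 this |>.2]
  obtain ⟨m₀, hm₀⟩ := h1.exists_forall_of_atTop
  obtain ⟨m₂, hm₂⟩ := h2.exists_forall_of_atTop
  set m₁ : ℝ := max (max m₀ m₂) 2 with hm₁def
  have hm₁2 : (2:ℝ) ≤ m₁ := le_max_right _ _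
  have hm₁0 : 0 < m₁ := lt_of_lt_of_le two_pos hm₁2
  refine ⟨(2*m₁) ^ ρ (2*m₁), Real.rpow_nonneg (by linarith) _, ?_⟩
  intro m hm
  rcases le_or_gt m m₁ with hcase | hcase
  · -- small m : monotonicity
    have hmem : (2*m) ∈ Set.Ioi (0:ℝ) := by simpa using by linarith
    have hmem' : (2*m₁) ∈ Set.Ioi (0:ℝ) := by simpa using by linarith
    have := hmono.monotoneOn hmem hmem' (by linarith)
    have hterm : 0 ≤ (2:ℝ) ^ (ρ₀+1) * m ^ ρ m :=
      mul_nonneg (Real.rpow_nonneg (by norm_num) _) (Real.rpow_nonneg hm.le _)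
    simpa using le_trans this (by linarith)
  · -- large m : regular variation estimate
    have hm2 : (2:ℝ) ≤ m := le_trans hm₁2 hcase.le
    have hlogm : 0 < Real.log m := Real.log_pos (by linarith)
    -- MVT on [m, 2m]
    obtain ⟨ξ, hξmem, hξeq⟩ := exists_deriv_eq_slope ρ (by linarith : m < 2*m)
      (hdiff.continuous.continuousOn) (hdiff.differentiableOn)
    have hξm : m < ξ := hξmem.1
    have hξ2m : ξ < 2*m := hξmem.2
    have hslope : ρ (2*m) - ρ m = deriv ρ ξ * m := by
      have hmne : (2*m - m) ≠ 0 := by linarith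
      rw [eq_div_iff hmne] at hξeq
      nlinarith [hξeq]
    have hξ0 : (0:ℝ) < ξ := by linarith
    have hlogξ : 0 < Real.log ξ := Real.log_pos (by linarith)
    have hbound : |deriv ρ ξ * ξ * Real.log ξ| ≤ Real.log 2 / 2 :=
      hm₀ ξ (le_trans (le_trans (le_max_left m₀ m₂) (le_max_left _ _)) (by linarith))
    have key : |(ρ (2*m) - ρ m) * Real.log m| ≤ Real.log 2 / 2 := by
      rw [hslope]
      have e1 : |deriv ρ ξ * m * Real.log m| = |deriv ρ ξ| * (m * Real.log m) := by
        rw [abs_mul, abs_mul, abs_of_pos (by linarith : (0:ℝ) < m), abs_of_pos hlogm, mul_assoc]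
      have e2 : |deriv ρ ξ * ξ * Real.log ξ| = |deriv ρ ξ| * (ξ * Real.log ξ) := by
        rw [abs_mul, abs_mul, abs_of_pos hξ0, abs_of_pos hlogξ, mul_assoc]
      have : |deriv ρ ξ| * (m * Real.log m) ≤ |deriv ρ ξ| * (ξ * Real.log ξ) := by
        apply mul_le_mul_of_nonneg_left _ (abs_nonneg _)
        have : Real.log m ≤ Real.log ξ := Real.log_le_log (by linarith) hξm.le
        nlinarith
      calc |deriv ρ ξ * m * Real.log m| = |deriv ρ ξ| * (m * Real.log m) := e1
        _ ≤ |deriv ρ ξ| * (ξ * Real.log ξ) := this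
        _ = |deriv ρ ξ * ξ * Real.log ξ| := e2.symm
        _ ≤ Real.log 2 / 2 := hbound
    have hρ2m : ρ (2*m) ≤ ρ₀ + 1/2 :=
      hm₂ (2*m) (le_trans (le_trans (le_max_right m₀ m₂) (le_max_left _ _)) (by linarith))
    -- main log inequality
    have hmain : Real.log (2*m) * ρ (2*m) ≤ Real.log 2 * (ρ₀+1) + Real.log m * ρ m := by
      have hlog2m : Real.log (2*m) = Real.log 2 + Real.log m :=
        Real.log_mul (by norm_num) (by linarith)
      have h₁ : Real.log 2 * ρ (2*m) ≤ Real.log 2 * (ρ₀ + 1/2) :=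
        mul_le_mul_of_nonneg_left hρ2m hlog2.le
      have h₂ : (ρ (2*m) - ρ m) * Real.log m ≤ Real.log 2 / 2 :=
        le_trans (le_abs_self _) key
      rw [hlog2m]
      nlinarith
    have lhs : (2*m) ^ ρ (2*m) = Real.exp (Real.log (2*m) * ρ (2*m)) := by
      rw [Real.rpow_def_of_pos (by linarith)]
    have rhs : (2:ℝ) ^ (ρ₀+1) * m ^ ρ m
        = Real.exp (Real.log 2 * (ρ₀+1) + Real.log m * ρ m) := by
      rw [Real.rpow_def_of_pos (by norm_num : (0:ℝ) < 2),
        Real.rpow_def_of_pos (by linarith : (0:ℝ) < m), ← Real.exp_add]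
    have : (2*m) ^ ρ (2*m) ≤ (2:ℝ) ^ (ρ₀+1) * m ^ ρ m := by
      rw [lhs, rhs]; exact Real.exp_le_exp.2 hmain
    have hB : 0 ≤ (2*m₁) ^ ρ (2*m₁) := Real.rpow_nonneg (by linarith) _
    linarith

set_option maxHeartbeats 1600000 in
/-- Step 1 of Theorem 4.4 (complex-scalar version): an infinite order differential
operator with coefficients satisfying the G-estimates acts continuously between
the spaces of entire functions of proximate orders ρ₁ and ρ₂. -/
theorem stmt_18 (ρ₁ ρ₂ : ℝ → ℝ) (ρ₁₀ ρ₂₀ : ℝ) (hρ₁₀ : 0 < ρ₁₀) (hρ₂₀ : 0 < ρ₂₀)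
    (hdiff₁ : Differentiable ℝ ρ₁) (hdiff₂ : Differentiable ℝ ρ₂)
    (hpos₁ : ∀ r, 0 ≤ r → 0 ≤ ρ₁ r) (hpos₂ : ∀ r, 0 ≤ r → 0 ≤ ρ₂ r)
    (hlim₁ : Filter.Tendsto ρ₁ Filter.atTop (nhds ρ₁₀))
    (hlim₂ : Filter.Tendsto ρ₂ Filter.atTop (nhds ρ₂₀))
    (hder₁ : Filter.Tendsto (fun r => deriv ρ₁ r * r * Real.log r) Filter.atTop (nhds 0))
    (hder₂ : Filter.Tendsto (fun r => deriv ρ₂ r * r * Real.log r) Filter.atTop (nhds 0))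
    (hmono₁ : StrictMonoOn (fun r => r ^ ρ₁ r) (Set.Ioi (0:ℝ)))
    (hmono₂ : StrictMonoOn (fun r => r ^ ρ₂ r) (Set.Ioi (0:ℝ)))
    (hzero₁ : Filter.Tendsto (fun r => r ^ ρ₁ r) (nhdsWithin 0 (Set.Ioi 0)) (nhds 0))
    (hzero₂ : Filter.Tendsto (fun r => r ^ ρ₂ r) (nhdsWithin 0 (Set.Ioi 0)) (nhds 0))
    (hO : ∃ (K : ℝ) (r₀ : ℝ), 0 < K ∧ ∀ r ≥ r₀, r ^ ρ₁ r ≤ K * r ^ ρ₂ r)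
    (hle : ∀ r, 0 ≤ r → ρ₁ r ≤ ρ₂ r)
    (φ₁ : ℝ → ℝ) (hφ₁pos : ∀ t, 0 < t → 0 < φ₁ t)
    (hφ₁ : ∀ r, 0 < r → φ₁ (r ^ ρ₁ r) = r)
    (hφ₁p : ∀ t, 0 < t → (φ₁ t) ^ ρ₁ (φ₁ t) = t)
    (G₁ : ℕ → ℝ) (hG₁0 : G₁ 0 = 1)
    (hG₁ : ∀ ℓ : ℕ, 0 < ℓ → G₁ ℓ = φ₁ (ℓ : ℝ) ^ ℓ / (Real.exp 1 * ρ₁₀) ^ ((ℓ : ℝ) / ρ₁₀))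
    (u : ℕ → ℂ → ℂ) (huhol : ∀ ℓ, Differentiable ℂ (u ℓ))
    (hu : ∀ ε > (0:ℝ), ∃ (σ : ℝ) (C : ℝ), 0 < σ ∧ 0 < C ∧ ∀ ℓ : ℕ, ∀ z : ℂ,
      ‖u ℓ z‖ ≤
        C * (G₁ ℓ / (ℓ.factorial : ℝ)) * ε ^ ℓ
          * Real.exp (σ * ‖z‖ ^ ρ₂ (‖z‖))) :
    ∀ τ > (0:ℝ), ∃ (σ : ℝ) (C : ℝ), 0 < σ ∧ 0 < C ∧
      ∀ f : ℂ → ℂ, Differentiable ℂ f → ∀ M : ℝ, 0 ≤ M →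
        (∀ z : ℂ, ‖f z‖ ≤ M * Real.exp (τ * ‖z‖ ^ ρ₁ (‖z‖))) →
        (∀ z : ℂ, Summable (fun ℓ : ℕ => u ℓ z * iteratedDeriv ℓ f z)) ∧
        ∀ z : ℂ, ‖∑' ℓ : ℕ, u ℓ z * iteratedDeriv ℓ f z‖ ≤
          C * M * Real.exp ((σ + (2:ℝ) ^ (ρ₁₀ + 1) * τ)
            * ‖z‖ ^ ρ₂ (‖z‖)) := by
  intro τ hτ
  -- notation
  set c : ℝ := (2:ℝ) ^ (ρ₁₀ + 1) * τ with hcdef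
  have h2ρ : (2:ℝ) ≤ (2:ℝ) ^ (ρ₁₀ + 1) := by
    calc (2:ℝ) = (2:ℝ) ^ (1:ℝ) := by rw [Real.rpow_one]
      _ ≤ (2:ℝ) ^ (ρ₁₀ + 1) :=
        Real.rpow_le_rpow_of_exponent_le one_le_two (by linarith)
  have hτc : τ ≤ c := by nlinarith
  have hcpos : 0 < c := lt_of_lt_of_le hτ hτc
  obtain ⟨B, hB0, hB⟩ := doubling ρ₁ ρ₁₀ hdiff₁ hlim₁ hder₁ hmono₁
  -- geometric control of the (e ρ₁₀)^{-ℓ/ρ₁₀} factor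
  set q : ℝ := (Real.exp 1 * ρ₁₀) ^ ((1:ℝ) / ρ₁₀) with hqdef
  have hqpos : 0 < q := Real.rpow_pos_of_pos (by positivity) _
  set A : ℝ := max 1 q⁻¹ with hAdef
  have hApos : 0 < A := lt_of_lt_of_le one_pos (le_max_left _ _)
  have hqA : q⁻¹ ≤ A := le_max_right _ _
  set ε : ℝ := 1 / (2 * A * Real.exp c) with hεdef
  have hεpos : 0 < ε := by positivity
  obtain ⟨σ₀, C₀, hσ₀, hC₀, hubound⟩ := hu ε hεpos
  set D : ℝ := c + τ * B + τ with hDdef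
  have hD0 : 0 < D := by positivity
  refine ⟨σ₀, 2 * C₀ * Real.exp D, hσ₀, by positivity, ?_⟩
  intro f hf M hM hfb
  -- basic comparison of the two weights
  have hr12 : ∀ r : ℝ, 0 ≤ r → r ^ ρ₁ r ≤ r ^ ρ₂ r + 1 := by
    intro r hr
    rcases le_or_gt 1 r with h1 | h1
    · have := Real.rpow_le_rpow_of_exponent_le h1 (hle r hr)
      linarith
    · have h2 : r ^ ρ₁ r ≤ 1 := Real.rpow_le_one hr h1.le (hpos₁ r hr)
      have h3 : 0 ≤ r ^ ρ₂ r := Real.rpow_nonneg hr _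
      linarith
  -- the uniform per-term estimate
  have hterm : ∀ z : ℂ, ∀ ℓ : ℕ,
      ‖u ℓ z * iteratedDeriv ℓ f z‖ ≤
        (C₀ * M * Real.exp D *
          Real.exp ((σ₀ + c) * ‖z‖ ^ ρ₂ (‖z‖))) * (1/2) ^ ℓ := by
    intro z ℓ
    set r : ℝ := ‖z‖ with hrdef
    have hr0 : 0 ≤ r := norm_nonneg z
    have hrρ₂0 : 0 ≤ r ^ ρ₂ r := Real.rpow_nonneg hr0 _
    rcases Nat.eq_zero_or_pos ℓ with rfl | hℓpos
    · -- the ℓ = 0 term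
      have h1 : ‖u 0 z * iteratedDeriv 0 f z‖
          = ‖u 0 z‖ * ‖f z‖ := by
        rw [norm_mul, iteratedDeriv_zero]
      have h2 := hubound 0 z
      rw [hG₁0] at h2
      simp only [Nat.factorial_zero, Nat.cast_one, pow_zero, mul_one, div_one] at h2
      have h3 := hfb z
      have h4 : τ * r ^ ρ₁ r ≤ c * r ^ ρ₂ r + D := by
        have := hr12 r hr0
        nlinarith [mul_le_mul_of_nonneg_left this hτ.le, hB0]
      calc ‖u 0 z * iteratedDeriv 0 f z‖
          ≤ (C₀ * Real.exp (σ₀ * r ^ ρ₂ r)) * (M * Real.exp (τ * r ^ ρ₁ r)) := by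
            rw [h1]
            exact mul_le_mul h2 h3 (norm_nonneg _) (by positivity)
        _ ≤ (C₀ * M * Real.exp D * Real.exp ((σ₀ + c) * r ^ ρ₂ r)) * (1/2) ^ 0 := by
            rw [pow_zero, mul_one]
            calc C₀ * Real.exp (σ₀ * r ^ ρ₂ r) * (M * Real.exp (τ * r ^ ρ₁ r))
                = C₀ * M * (Real.exp (σ₀ * r ^ ρ₂ r) * Real.exp (τ * r ^ ρ₁ r)) := by ring
              _ = C₀ * M * Real.exp (σ₀ * r ^ ρ₂ r + τ * r ^ ρ₁ r) := by
                  rw [Real.exp_add]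
              _ ≤ C₀ * M * Real.exp (D + (σ₀ + c) * r ^ ρ₂ r) :=
                  mul_le_mul_of_nonneg_left (Real.exp_le_exp.2 (by linarith)) (by positivity)
              _ = C₀ * M * (Real.exp D * Real.exp ((σ₀ + c) * r ^ ρ₂ r)) := by
                  rw [Real.exp_add]
              _ = C₀ * M * Real.exp D * Real.exp ((σ₀ + c) * r ^ ρ₂ r) := by ring
    · -- the ℓ ≥ 1 terms : Cauchy estimate on circle of radius s = φ₁ ℓ
      have hℓℝ : (0:ℝ) < (ℓ:ℝ) := by exact_mod_cast hℓpos
      set s : ℝ := φ₁ (ℓ:ℝ) with hsdef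
      have hs : 0 < s := hφ₁pos _ hℓℝ
      have hsρ : s ^ ρ₁ s = (ℓ:ℝ) := hφ₁p _ hℓℝ
      set X : ℝ := (r + s) ^ ρ₁ (r + s) with hXdef
      have hX0 : 0 ≤ X := Real.rpow_nonneg (by linarith) _
      set M' : ℝ := M * Real.exp (τ * (X + 1)) with hM'def
      -- bound of f on the circle
      have hM' : ∀ θ : ℝ, ‖f (circleMap z s θ)‖ ≤ M' := by
        intro θ
        set w := circleMap z s θ with hwdef
        have hw : ‖w‖ ≤ r + s := by
          calc ‖w‖ = ‖z + (w - z)‖ := by ring_nf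
            _ ≤ ‖z‖ + ‖w - z‖ := norm_add_le _ _
            _ = r + s := by
                rw [hwdef, circleMap_sub_center, norm_circleMap_zero, abs_of_pos hs, hrdef]
        have hwX : ‖w‖ ^ ρ₁ (‖w‖) ≤ X + 1 := by
          rcases eq_or_lt_of_le (norm_nonneg w) with h0 | h0
          · rw [← h0]
            have : (0:ℝ) ^ ρ₁ 0 ≤ 1 :=
              Real.rpow_le_one le_rfl zero_le_one (hpos₁ 0 le_rfl)
            linarith
          · have hmem : ‖w‖ ∈ Set.Ioi (0:ℝ) := h0
            have hmem' : r + s ∈ Set.Ioi (0:ℝ) := by simp; linarith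
            have := hmono₁.monotoneOn hmem hmem' hw
            change ‖w‖ ^ ρ₁ ‖w‖ ≤ (r + s) ^ ρ₁ (r + s) at this
            linarith
        calc ‖f w‖ ≤ M * Real.exp (τ * ‖w‖ ^ ρ₁ (‖w‖)) := hfb w
          _ ≤ M' := by
              rw [hM'def]
              gcongr
      have hcauchy := cauchy_est f hf z s hs M' hM' ℓ
      have hub := hubound ℓ z
      have hM'0 : 0 ≤ M' := by positivity
      -- G₁ ℓ = s^ℓ / q^ℓ
      have hGval : G₁ ℓ = s ^ ℓ / q ^ ℓ := by
        rw [hG₁ ℓ hℓpos, ← hsdef, hqdef, ← Real.rpow_natCast ((Real.exp 1 * ρ₁₀) ^ ((1:ℝ)/ρ₁₀)) ℓ,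
          ← Real.rpow_mul (by positivity)]
        congr 2
        field_simp
      have hfact0 : (0:ℝ) < (ℓ.factorial : ℝ) := by exact_mod_cast ℓ.factorial_pos
      -- product bound
      have step1 : ‖u ℓ z * iteratedDeriv ℓ f z‖ ≤
          (C₀ * (G₁ ℓ / (ℓ.factorial : ℝ)) * ε ^ ℓ * Real.exp (σ₀ * r ^ ρ₂ r)) *
            ((ℓ.factorial : ℝ) * M' / s ^ ℓ) := by
        rw [norm_mul]
        exact mul_le_mul hub hcauchy (norm_nonneg _) (by rw [hGval]; positivity)
      have step2 : (C₀ * (G₁ ℓ / (ℓ.factorial : ℝ)) * ε ^ ℓ * Real.exp (σ₀ * r ^ ρ₂ r)) *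
            ((ℓ.factorial : ℝ) * M' / s ^ ℓ)
          = C₀ * (ε * q⁻¹) ^ ℓ * Real.exp (σ₀ * r ^ ρ₂ r) * M' := by
        rw [hGval, mul_pow, inv_pow]
        field_simp
      -- exponent bound : τ (X+1) ≤ c r^{ρ₂ r} + c ℓ + D
      have hXbound : X ≤ (2:ℝ) ^ (ρ₁₀ + 1) * (r ^ ρ₂ r + 1 + (ℓ:ℝ)) + B := by
        set m : ℝ := max r s with hmdef
        have hm0 : 0 < m := lt_of_lt_of_le hs (le_max_right _ _)
        have hrs2m : r + s ≤ 2 * m := by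
          have := le_max_left r s
          have := le_max_right r s
          simp only [← hmdef] at *
          linarith
        have hmem : r + s ∈ Set.Ioi (0:ℝ) := by simp; linarith
        have hmem' : 2 * m ∈ Set.Ioi (0:ℝ) := by simp; linarith
        have h1 : X ≤ (2*m) ^ ρ₁ (2*m) := by
          have := hmono₁.monotoneOn hmem hmem' hrs2m
          simpa using this
        have h2 := hB m hm0
        have h3 : m ^ ρ₁ m ≤ r ^ ρ₂ r + 1 + (ℓ:ℝ) := by
          rcases max_cases r s with ⟨he, _⟩ | ⟨he, _⟩
          · rw [hmdef, he]
            have := hr12 r hr0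
            have : (0:ℝ) ≤ (ℓ:ℝ) := hℓℝ.le
            linarith [hr12 r hr0]
          · rw [hmdef, he, hsρ]
            have h4 : 0 ≤ r ^ ρ₂ r := hrρ₂0
            linarith
        have h5 : (0:ℝ) < (2:ℝ) ^ (ρ₁₀ + 1) := by linarith
        have h6 := mul_le_mul_of_nonneg_left h3 h5.le
        linarith
      have hexp : Real.exp (τ * (X + 1)) ≤
          Real.exp (c * r ^ ρ₂ r + D) * Real.exp c ^ ℓ := by
        rw [← Real.exp_nat_mul, ← Real.exp_add]
        apply Real.exp_le_exp.2
        have h6 := mul_le_mul_of_nonneg_left hXbound hτ.le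
        have hcd : τ * ((2:ℝ) ^ (ρ₁₀ + 1) * (r ^ ρ₂ r + 1 + (ℓ:ℝ)) + B)
            = c * r ^ ρ₂ r + c + c * (ℓ:ℝ) + τ * B := by rw [hcdef]; ring
        rw [hcd] at h6
        have hD' : D = c + τ * B + τ := hDdef
        linarith
      -- assemble
      have hεA : ε * A * Real.exp c = 1/2 := by
        rw [hεdef]; field_simp
      calc ‖u ℓ z * iteratedDeriv ℓ f z‖
          ≤ C₀ * (ε * q⁻¹) ^ ℓ * Real.exp (σ₀ * r ^ ρ₂ r) * M' := by
            rw [← step2]; exact step1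
        _ ≤ C₀ * (ε * A) ^ ℓ * Real.exp (σ₀ * r ^ ρ₂ r) *
              (M * (Real.exp (c * r ^ ρ₂ r + D) * Real.exp c ^ ℓ)) := by
            gcongr
            rw [hM'def]; exact mul_le_mul_of_nonneg_left hexp hM
        _ = (C₀ * M * Real.exp D * Real.exp ((σ₀ + c) * r ^ ρ₂ r)) *
              (ε * A * Real.exp c) ^ ℓ := by
            have e3 : Real.exp (σ₀ * r ^ ρ₂ r) * Real.exp (c * r ^ ρ₂ r + D)
                = Real.exp D * Real.exp ((σ₀ + c) * r ^ ρ₂ r) := by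
              rw [← Real.exp_add, ← Real.exp_add]; congr 1; ring
            calc C₀ * (ε * A) ^ ℓ * Real.exp (σ₀ * r ^ ρ₂ r) *
                  (M * (Real.exp (c * r ^ ρ₂ r + D) * Real.exp c ^ ℓ))
                = C₀ * M * ((ε * A) ^ ℓ * Real.exp c ^ ℓ) *
                  (Real.exp (σ₀ * r ^ ρ₂ r) * Real.exp (c * r ^ ρ₂ r + D)) := by ring
              _ = C₀ * M * ((ε * A) ^ ℓ * Real.exp c ^ ℓ) *
                  (Real.exp D * Real.exp ((σ₀ + c) * r ^ ρ₂ r)) := by rw [e3]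
              _ = (C₀ * M * Real.exp D * Real.exp ((σ₀ + c) * r ^ ρ₂ r)) *
                  (ε * A * Real.exp c) ^ ℓ := by rw [mul_pow (ε * A)]; ring
        _ = (C₀ * M * Real.exp D * Real.exp ((σ₀ + c) * r ^ ρ₂ r)) * (1/2) ^ ℓ := by
            rw [hεA]
  -- conclusion
  have hKpos : ∀ z : ℂ, 0 ≤ C₀ * M * Real.exp D *
      Real.exp ((σ₀ + c) * ‖z‖ ^ ρ₂ (‖z‖)) := by
    intro z; positivity
  have hgeo : Summable (fun ℓ : ℕ => ((1:ℝ)/2) ^ ℓ) :=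
    summable_geometric_of_lt_one (by norm_num) (by norm_num)
  have hsumK : ∀ z : ℂ, Summable (fun ℓ : ℕ =>
      (C₀ * M * Real.exp D * Real.exp ((σ₀ + c) * ‖z‖ ^ ρ₂ (‖z‖)))
        * (1/2) ^ ℓ) := fun z => hgeo.mul_left _
  have hsnorm : ∀ z : ℂ, Summable (fun ℓ : ℕ =>
      ‖u ℓ z * iteratedDeriv ℓ f z‖) := by
    intro z
    exact Summable.of_nonneg_of_le (fun ℓ => norm_nonneg _) (hterm z) (hsumK z)
  refine ⟨fun z => ?_, fun z => ?_⟩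
  · exact Summable.of_norm (hsnorm z)
  · have hsn' : Summable fun ℓ : ℕ => ‖u ℓ z * iteratedDeriv ℓ f z‖ := by
      exact hsnorm z
    have h1 : ‖∑' ℓ : ℕ, u ℓ z * iteratedDeriv ℓ f z‖
        ≤ ∑' ℓ : ℕ, ‖u ℓ z * iteratedDeriv ℓ f z‖ := by
      exact norm_tsum_le_tsum_norm hsn'
    have h2 : (∑' ℓ : ℕ, ‖u ℓ z * iteratedDeriv ℓ f z‖)
        ≤ ∑' ℓ : ℕ, (C₀ * M * Real.exp D *
            Real.exp ((σ₀ + c) * ‖z‖ ^ ρ₂ (‖z‖))) * (1/2) ^ ℓ :=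
      Summable.tsum_le_tsum (hterm z) (hsnorm z) (hsumK z)
    have h3 : (∑' ℓ : ℕ, (C₀ * M * Real.exp D *
            Real.exp ((σ₀ + c) * ‖z‖ ^ ρ₂ (‖z‖))) * (1/2) ^ ℓ)
        = (C₀ * M * Real.exp D *
            Real.exp ((σ₀ + c) * ‖z‖ ^ ρ₂ (‖z‖))) * 2 := by
      rw [tsum_mul_left, tsum_geometric_of_lt_one (by norm_num) (by norm_num)]
      norm_num
    calc ‖∑' ℓ : ℕ, u ℓ z * iteratedDeriv ℓ f z‖
        ≤ (C₀ * M * Real.exp D *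
            Real.exp ((σ₀ + c) * ‖z‖ ^ ρ₂ (‖z‖))) * 2 :=
          le_trans h1 (le_trans h2 (le_of_eq h3))
      _ = 2 * C₀ * Real.exp D * M *
            Real.exp ((σ₀ + c) * ‖z‖ ^ ρ₂ (‖z‖)) := by ring
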